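/- Let m ≥ 3 and let U ⊆ ℂ be open, connected, with 0 ∈ U. Suppose f : U → Mat(2×(2m−4), ℂ) and g : U → Mat(2×2, ℂ) are complex-differentiable on U with f(0) = 0, g(0) = 0, and g′ = −f·(f′)^♯. For λ ∈ ℂ \ {0} let H_λ := I_{2m} + λ⁻¹H₁ + λ⁻²H₂, where with respect to the block splitting 2m = 2 + (2m−4) + 2, H₁ = ((0, f, 0), (0, 0, −f^♯), (0, 0, 0)) and H₂ = ((0, 0, g), (0, 0, 0), (0, 0, 0)). Then for every λ ≠ 0 and every z ∈ U, H_λ(z)ᵗ J_{2m} H_λ(z) = J_{2m}. -/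

import Mathlib

open Matrix

noncomputable section

/-- `J_k`: the k×k matrix with ones on the antidiagonal. -/
def Jmat (k : ℕ) : Matrix (Fin k) (Fin k) ℂ :=
  fun i j => if (i : ℕ) + (j : ℕ) = k - 1 then 1 else 0

/-- `X^♯ = J_k Xᵗ J₂` for a 2×k matrix `X`. -/
def sharp (k : ℕ) (X : Matrix (Fin 2) (Fin k) ℂ) : Matrix (Fin k) (Fin 2) ℂ :=
  Jmat k * Xᵀ * Jmat 2

/-- The 2m×2m matrix `((0, f, 0), (0, 0, −f^♯), (0, 0, 0))` w.r.t. the splitting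
`2m = 2 + (2m−4) + 2`. -/
def triMat (m : ℕ) (f : Matrix (Fin 2) (Fin (2 * m - 4)) ℂ) :
    Matrix (Fin (2 * m)) (Fin (2 * m)) ℂ := fun i j =>
  if hi : (i : ℕ) < 2 then
    if hj1 : (j : ℕ) < 2 then 0
    else if hj : (j : ℕ) < 2 * m - 2 then
      f ⟨(i : ℕ), hi⟩ ⟨(j : ℕ) - 2, by have := j.isLt; omega⟩
    else 0
  else if hi2 : (i : ℕ) < 2 * m - 2 then
    if hj : (j : ℕ) < 2 * m - 2 then 0
    else
      -(sharp (2 * m - 4) f ⟨(i : ℕ) - 2, by have := i.isLt; omega⟩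
          ⟨(j : ℕ) - (2 * m - 2), by have := j.isLt; omega⟩)
  else 0

/-- The 2m×2m matrix `((0, 0, g), (0, 0, 0), (0, 0, 0))` w.r.t. the splitting
`2m = 2 + (2m−4) + 2`. -/
def cornerMat (m : ℕ) (g : Matrix (Fin 2) (Fin 2) ℂ) :
    Matrix (Fin (2 * m)) (Fin (2 * m)) ℂ := fun i j =>
  if hi : (i : ℕ) < 2 then
    if hj : 2 * m - 2 ≤ (j : ℕ) then
      g ⟨(i : ℕ), hi⟩ ⟨(j : ℕ) - (2 * m - 2), by have := j.isLt; omega⟩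
    else 0
  else 0

lemma Jmat_apply_eq (k : ℕ) (i j : Fin k) :
    Jmat k i j = if j = i.rev then 1 else 0 := by
  have hi := i.isLt
  simp only [Jmat]
  by_cases h : (i : ℕ) + (j : ℕ) = k - 1
  · rw [if_pos h, if_pos (Fin.ext (by rw [Fin.val_rev]; omega))]
  · rw [if_neg h, if_neg]
    intro hc
    apply h
    rw [hc, Fin.val_rev]
    omega

lemma Jmat_apply_eq' (k : ℕ) (i j : Fin k) :
    Jmat k i j = if i = j.rev then 1 else 0 := by
  have hj := j.isLt
  simp only [Jmat]
  by_cases h : (i : ℕ) + (j : ℕ) = k - 1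
  · rw [if_pos h, if_pos (Fin.ext (by rw [Fin.val_rev]; omega))]
  · rw [if_neg h, if_neg]
    intro hc
    apply h
    rw [hc, Fin.val_rev]
    omega

lemma Jmat_mul_apply {k r : ℕ} (X : Matrix (Fin k) (Fin r) ℂ) (i : Fin k) (j : Fin r) :
    (Jmat k * X) i j = X i.rev j := by
  rw [Matrix.mul_apply]
  rw [Finset.sum_congr rfl fun l _ => by rw [Jmat_apply_eq, ite_mul, one_mul, zero_mul]]
  simp

lemma mul_Jmat_apply {k r : ℕ} (X : Matrix (Fin r) (Fin k) ℂ) (i : Fin r) (j : Fin k) :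
    (X * Jmat k) i j = X i j.rev := by
  rw [Matrix.mul_apply]
  rw [Finset.sum_congr rfl fun l _ => by rw [Jmat_apply_eq', mul_ite, mul_one, mul_zero]]
  simp

lemma sharp_apply {k : ℕ} (X : Matrix (Fin 2) (Fin k) ℂ) (p : Fin k) (q : Fin 2) :
    sharp k X p q = X q.rev p.rev := by
  rw [sharp, mul_Jmat_apply, Jmat_mul_apply, Matrix.transpose_apply]

lemma sum_shift {n : ℕ} (s k : ℕ) (hsk : s + k ≤ n) (F : Fin n → ℂ)
    (hF : ∀ l : Fin n, (l : ℕ) < s ∨ s + k ≤ (l : ℕ) → F l = 0) :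
    ∑ l : Fin n, F l = ∑ q : Fin k, F ⟨s + (q : ℕ), by have := q.isLt; omega⟩ := by
  classical
  set G : ℕ → ℂ := fun i => if h : i < n then F ⟨i, h⟩ else 0 with hG
  have h1 : ∑ l : Fin n, F l = ∑ i ∈ Finset.range n, G i := by
    rw [← Fin.sum_univ_eq_sum_range]
    exact Finset.sum_congr rfl fun l _ => by simp [hG, l.isLt]
  have h2 : ∑ i ∈ Finset.range n, G i = ∑ i ∈ Finset.Ico s (s + k), G i := by
    refine (Finset.sum_subset ?_ ?_).symm
    · intro x hx
      simp only [Finset.mem_Ico] at hx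
      simp only [Finset.mem_range]
      omega
    · intro x hx hnx
      simp only [Finset.mem_range] at hx
      simp only [Finset.mem_Ico] at hnx
      simp only [hG, dif_pos hx]
      exact hF _ (by simpa using (by omega : (x : ℕ) < s ∨ s + k ≤ x))
  have h3 : ∑ i ∈ Finset.Ico s (s + k), G i = ∑ i ∈ Finset.range k, G (s + i) := by
    rw [Finset.sum_Ico_eq_sum_range]
    simp
  rw [h1, h2, h3, ← Fin.sum_univ_eq_sum_range]
  refine Finset.sum_congr rfl fun q _ => ?_
  have hq := q.isLt
  simp [hG, show s + (q : ℕ) < n by omega]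

lemma lemma_e1 (m : ℕ) (hm : 3 ≤ m) (f : Matrix (Fin 2) (Fin (2 * m - 4)) ℂ) :
    (triMat m f)ᵀ * Jmat (2 * m) + Jmat (2 * m) * triMat m f = 0 := by
  ext i j
  have hi := i.isLt
  have hj := j.isLt
  rw [Matrix.add_apply, Matrix.zero_apply, mul_Jmat_apply, Jmat_mul_apply,
    Matrix.transpose_apply]
  simp only [triMat, sharp_apply, Fin.val_rev]
  split_ifs <;>
    first
      | (exfalso; omega)
      | ring1
      | (rw [add_neg_eq_zero]
         exact congrArg₂ _ (Fin.ext (by try simp only [Fin.val_rev, Fin.val_mk]; try omega))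
           (Fin.ext (by try simp only [Fin.val_rev, Fin.val_mk]; try omega)))
      | (rw [neg_add_eq_zero]
         exact congrArg₂ _ (Fin.ext (by try simp only [Fin.val_rev, Fin.val_mk]; try omega))
           (Fin.ext (by try simp only [Fin.val_rev, Fin.val_mk]; try omega)))

lemma lemma_e3 (m : ℕ) (hm : 3 ≤ m) (f : Matrix (Fin 2) (Fin (2 * m - 4)) ℂ)
    (g : Matrix (Fin 2) (Fin 2) ℂ) :
    ((triMat m f)ᵀ * Jmat (2 * m)) * cornerMat m g = 0 := by
  ext i j
  rw [Matrix.mul_apply, Matrix.zero_apply]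
  apply Finset.sum_eq_zero
  intro l _
  rw [mul_Jmat_apply, Matrix.transpose_apply]
  have hl := l.isLt
  have hi := i.isLt
  have hj := j.isLt
  simp only [triMat, cornerMat, sharp_apply, Fin.val_rev]
  split_ifs <;> first | (exfalso; omega) | ring1

lemma lemma_e4 (m : ℕ) (hm : 3 ≤ m) (f : Matrix (Fin 2) (Fin (2 * m - 4)) ℂ)
    (g : Matrix (Fin 2) (Fin 2) ℂ) :
    ((cornerMat m g)ᵀ * Jmat (2 * m)) * triMat m f = 0 := by
  ext i j
  rw [Matrix.mul_apply, Matrix.zero_apply]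
  apply Finset.sum_eq_zero
  intro l _
  rw [mul_Jmat_apply, Matrix.transpose_apply]
  have hl := l.isLt
  have hi := i.isLt
  have hj := j.isLt
  simp only [triMat, cornerMat, sharp_apply, Fin.val_rev]
  split_ifs <;> first | (exfalso; omega) | ring1

lemma lemma_e5 (m : ℕ) (hm : 3 ≤ m) (g : Matrix (Fin 2) (Fin 2) ℂ) :
    ((cornerMat m g)ᵀ * Jmat (2 * m)) * cornerMat m g = 0 := by
  ext i j
  rw [Matrix.mul_apply, Matrix.zero_apply]
  apply Finset.sum_eq_zero
  intro l _
  rw [mul_Jmat_apply, Matrix.transpose_apply]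
  have hl := l.isLt
  have hi := i.isLt
  have hj := j.isLt
  simp only [cornerMat, Fin.val_rev]
  split_ifs <;> first | (exfalso; omega) | ring1

set_option maxHeartbeats 2000000 in
lemma lemma_e2 (m : ℕ) (hm : 3 ≤ m) (f : Matrix (Fin 2) (Fin (2 * m - 4)) ℂ)
    (g : Matrix (Fin 2) (Fin 2) ℂ)
    (key : ∀ a b : Fin 2, g a b + g b.rev a.rev + ∑ p, f a p * f b.rev p.rev = 0) :
    ((triMat m f)ᵀ * Jmat (2 * m)) * triMat m f
      + (Jmat (2 * m) * cornerMat m g + (cornerMat m g)ᵀ * Jmat (2 * m)) = 0 := by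
  ext i j
  have hi := i.isLt
  have hj := j.isLt
  rw [Matrix.add_apply, Matrix.add_apply, Matrix.zero_apply, Jmat_mul_apply,
    mul_Jmat_apply, Matrix.transpose_apply, Matrix.mul_apply]
  rw [Finset.sum_congr rfl fun l _ => by
    rw [mul_Jmat_apply, Matrix.transpose_apply]]
  by_cases hcase : 2 * m - 2 ≤ (i : ℕ) ∧ 2 * m - 2 ≤ (j : ℕ)
  · obtain ⟨hi2, hj2⟩ := hcase
    set a : Fin 2 := ⟨2 * m - 1 - (i : ℕ), by omega⟩ with ha
    set b : Fin 2 := ⟨(j : ℕ) - (2 * m - 2), by omega⟩ with hb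
    have hsum : (∑ l : Fin (2 * m), triMat m f l.rev i * triMat m f l j)
        = ∑ q : Fin (2 * m - 4), f a q * f b.rev q.rev := by
      rw [sum_shift 2 (2 * m - 4) (by omega)]
      · apply Finset.sum_congr rfl
        intro q _
        have hq := q.isLt
        simp only [triMat, sharp_apply, Fin.val_rev, Fin.val_mk, ha, hb]
        split_ifs <;>
          first
            | (exfalso; omega)
            | (rw [neg_mul_neg]
               congr 1 <;>
                 exact congrArg₂ _
                   (Fin.ext (by try simp only [Fin.val_rev, Fin.val_mk]; try omega))
                   (Fin.ext (by try simp only [Fin.val_rev, Fin.val_mk]; try omega)))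
      · intro l hl
        have hll := l.isLt
        simp only [triMat, sharp_apply, Fin.val_rev]
        split_ifs <;> first | (exfalso; omega) | ring1
    have hC1 : cornerMat m g i.rev j = g a b := by
      simp only [cornerMat, Fin.val_rev, ha, hb]
      split_ifs <;>
        first
          | (exfalso; omega)
          | exact congrArg₂ _
              (Fin.ext (by try simp only [Fin.val_rev, Fin.val_mk]; try omega))
              (Fin.ext (by try simp only [Fin.val_rev, Fin.val_mk]; try omega))
    have hC2 : cornerMat m g j.rev i = g b.rev a.rev := by
      simp only [cornerMat, Fin.val_rev, ha, hb]
      split_ifs <;>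
        first
          | (exfalso; omega)
          | exact congrArg₂ _
              (Fin.ext (by try simp only [Fin.val_rev, Fin.val_mk]; try omega))
              (Fin.ext (by try simp only [Fin.val_rev, Fin.val_mk]; try omega))
    rw [hsum, hC1, hC2]
    linear_combination key a b
  · have hz : ∀ l : Fin (2 * m), l ∈ Finset.univ →
        triMat m f l.rev i * triMat m f l j = 0 := by
      intro l _
      have hll := l.isLt
      simp only [triMat, sharp_apply, Fin.val_rev]
      split_ifs <;> first | (exfalso; omega) | ring1
    rw [Finset.sum_eq_zero hz]
    have hC1 : cornerMat m g i.rev j = 0 := by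
      simp only [cornerMat, Fin.val_rev]
      split_ifs <;> first | (exfalso; omega) | rfl
    have hC2 : cornerMat m g j.rev i = 0 := by
      simp only [cornerMat, Fin.val_rev]
      split_ifs <;> first | (exfalso; omega) | rfl
    rw [hC1, hC2]
    ring

lemma const_of_deriv_zero {U : Set ℂ} (hU : IsOpen U) (hUc : IsPreconnected U)
    {F : ℂ → ℂ} (hF : ∀ z ∈ U, HasDerivAt F 0 z) {x y : ℂ} (hx : x ∈ U) (hy : y ∈ U) :
    F x = F y := by
  have loc : ∀ z ∈ U, ∃ ε > 0, Metric.ball z ε ⊆ U ∧ ∀ w ∈ Metric.ball z ε, F w = F z := by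
    intro z hz
    obtain ⟨ε, hε, hball⟩ := Metric.isOpen_iff.mp hU z hz
    refine ⟨ε, hε, hball, fun w hw => ?_⟩
    refine (convex_ball z ε).is_const_of_fderivWithin_eq_zero (𝕜 := ℂ)
      (fun u hu => ((hF u (hball hu)).differentiableAt).differentiableWithinAt)
      (fun u hu => ?_) hw (Metric.mem_ball_self hε)
    rw [fderivWithin_of_isOpen Metric.isOpen_ball hu, (hF u (hball hu)).hasFDerivAt.fderiv]
    ext t
    simp
  by_contra hne
  have hSo : IsOpen {z : ℂ | z ∈ U ∧ F z = F y} := by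
    rw [Metric.isOpen_iff]
    intro z ⟨hzU, hzF⟩
    obtain ⟨ε, hε, hball, hconst⟩ := loc z hzU
    exact ⟨ε, hε, fun w hw => ⟨hball hw, (hconst w hw).trans hzF⟩⟩
  have hTo : IsOpen {z : ℂ | z ∈ U ∧ F z ≠ F y} := by
    rw [Metric.isOpen_iff]
    intro z ⟨hzU, hzF⟩
    obtain ⟨ε, hε, hball, hconst⟩ := loc z hzU
    exact ⟨ε, hε, fun w hw => ⟨hball hw, by rw [hconst w hw]; exact hzF⟩⟩
  obtain ⟨w, hwU, ⟨_, h1⟩, ⟨_, h2⟩⟩ :=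
    hUc _ _ hSo hTo (fun z hz => by by_cases h : F z = F y
                                    · exact Or.inl ⟨hz, h⟩
                                    · exact Or.inr ⟨hz, h⟩)
      ⟨y, hy, hy, rfl⟩ ⟨x, hx, hx, hne⟩
  exact h2 h1

/-- with `f(0) = 0`, `g(0) = 0` and `g′ = −f·(f′)^♯` on the open connected set `U`,
the loop `H_λ = I + λ⁻¹H₁ + λ⁻²H₂` satisfies `H_λᵗ J_{2m} H_λ = J_{2m}` for every `λ ≠ 0`. -/
theorem stmt8 (m : ℕ) (hm : 3 ≤ m) (U : Set ℂ) (hU : IsOpen U) (hUconn : IsConnected U)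
    (h0U : (0 : ℂ) ∈ U)
    (f f' : ℂ → Matrix (Fin 2) (Fin (2 * m - 4)) ℂ)
    (g : ℂ → Matrix (Fin 2) (Fin 2) ℂ)
    (hf0 : f 0 = 0) (hg0 : g 0 = 0)
    (hf : ∀ z ∈ U, ∀ i j, HasDerivAt (fun w => f w i j) (f' z i j) z)
    (hg : ∀ z ∈ U, ∀ i j,
      HasDerivAt (fun w => g w i j) ((-(f z * sharp (2 * m - 4) (f' z))) i j) z) :
    ∀ lam : ℂ, lam ≠ 0 → ∀ z ∈ U,
      ((1 : Matrix (Fin (2 * m)) (Fin (2 * m)) ℂ) + lam⁻¹ • triMat m (f z) +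
          (lam ^ 2)⁻¹ • cornerMat m (g z))ᵀ * Jmat (2 * m) *
        ((1 : Matrix (Fin (2 * m)) (Fin (2 * m)) ℂ) + lam⁻¹ • triMat m (f z) +
          (lam ^ 2)⁻¹ • cornerMat m (g z)) = Jmat (2 * m) := by
  -- the key pointwise identity  g + g^♯ + f f^♯ = 0 on U, entrywise
  have hkey : ∀ z ∈ U, ∀ a b : Fin 2,
      g z a b + g z b.rev a.rev + ∑ p, f z a p * f z b.rev p.rev = 0 := by
    intro z hz a b
    set φ : ℂ → ℂ :=
      fun w => g w a b + g w b.rev a.rev + ∑ p, f w a p * f w b.rev p.rev with hφ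
    have hd : ∀ w ∈ U, HasDerivAt φ 0 w := by
      intro w hw
      have h1 := hg w hw a b
      have h2 := hg w hw b.rev a.rev
      have h3 : HasDerivAt (fun u => ∑ p, f u a p * f u b.rev p.rev)
          (∑ p, (f' w a p * f w b.rev p.rev + f w a p * f' w b.rev p.rev)) w := by
        apply HasDerivAt.fun_sum
        intro p _
        exact (hf w hw a p).mul (hf w hw b.rev p.rev)
      have htot := (h1.add h2).add h3
      have heq : (-(f w * sharp (2 * m - 4) (f' w))) a b
          + (-(f w * sharp (2 * m - 4) (f' w))) b.rev a.rev
          + (∑ p, (f' w a p * f w b.rev p.rev + f w a p * f' w b.rev p.rev)) = 0 := by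
        simp only [Matrix.neg_apply, Matrix.mul_apply, sharp_apply, Fin.rev_rev,
          Finset.sum_add_distrib]
        have hre : (∑ p : Fin (2 * m - 4), f w b.rev p * f' w a p.rev)
            = ∑ p : Fin (2 * m - 4), f' w a p * f w b.rev p.rev := by
          apply Fintype.sum_bijective Fin.rev Fin.rev_involutive.bijective
          intro p
          rw [Fin.rev_rev]
          ring
        rw [hre]
        ring
      exact heq ▸ htot
    have hconst := const_of_deriv_zero hU hUconn.isPreconnected hd hz h0U
    have h0 : φ 0 = 0 := by
      rw [hφ]
      simp [hf0, hg0]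
    show φ z = 0
    rw [hconst, h0]
  intro lam hlam z hz
  have e1 := lemma_e1 m hm (f z)
  have e2 := lemma_e2 m hm (f z) (g z) (hkey z hz)
  have e3 := lemma_e3 m hm (f z) (g z)
  have e4 := lemma_e4 m hm (f z) (g z)
  have e5 := lemma_e5 m hm (g z)
  set T := triMat m (f z)
  set C := cornerMat m (g z)
  set J := Jmat (2 * m)
  have hb : ((lam ^ 2)⁻¹ : ℂ) = lam⁻¹ * lam⁻¹ := by
    rw [sq, mul_inv]
  rw [hb]
  have expand : ((1 : Matrix (Fin (2 * m)) (Fin (2 * m)) ℂ) + lam⁻¹ • T +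
        (lam⁻¹ * lam⁻¹) • C)ᵀ * J *
      ((1 : Matrix (Fin (2 * m)) (Fin (2 * m)) ℂ) + lam⁻¹ • T + (lam⁻¹ * lam⁻¹) • C)
      = J + lam⁻¹ • (Tᵀ * J + J * T)
        + (lam⁻¹ * lam⁻¹) • ((Tᵀ * J) * T + (J * C + Cᵀ * J))
        + (lam⁻¹ * (lam⁻¹ * lam⁻¹)) • ((Tᵀ * J) * C + (Cᵀ * J) * T)
        + ((lam⁻¹ * lam⁻¹) * (lam⁻¹ * lam⁻¹)) • ((Cᵀ * J) * C) := by
    simp only [Matrix.transpose_add, Matrix.transpose_smul, Matrix.transpose_one,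
      Matrix.add_mul, Matrix.mul_add, Matrix.smul_mul, Matrix.mul_smul,
      Matrix.one_mul, Matrix.mul_one, smul_add, smul_smul]
    module
  rw [expand, e1, e2, e3, e4, e5]
  simp
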